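/- arXiv:2012.15468 — 2 statements merged into one kernel-verified Lean document; each statement's English description precedes it below -/
import Mathlib

section
/- Let m ≥ 1 and N ≥ 1 be integers and let F, K ∈ ℝ^{m×m} be such that F − K and F + (N−1)K are invertible. Let M ∈ ℝ^{Nm×Nm} be the block matrix whose N diagonal m×m blocks all equal F and whose off-diagonal m×m blocks all equal K. Then M is invertible and M⁻¹ is the block matrix whose diagonal m×m blocks all equal H and whose off-diagonal m×m blocks all equal E, where E = (1/N)[(F + (N−1)K)⁻¹ − (F − K)⁻¹] and H = E + (F − K)⁻¹. -/
open Matrix Set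

namespace LQ

/-- Frobenius norm of a real matrix. -/
noncomputable def frob {a b : Type*} [Fintype a] [Fintype b] (M : Matrix a b ℝ) : ℝ :=
  Real.sqrt (∑ i, ∑ j, (M i j) ^ 2)

/-- Entrywise ℓ₁ norm of a real matrix. -/
noncomputable def l1norm {a b : Type*} [Fintype a] [Fintype b] (M : Matrix a b ℝ) : ℝ :=
  ∑ i, ∑ j, |M i j|

/-- Block matrix with all diagonal m×m blocks equal to `F` and all off-diagonal blocks equal to `K`. -/
def blockConst (N m : ℕ) (F K : Matrix (Fin m) (Fin m) ℝ) :
    Matrix (Fin N × Fin m) (Fin N × Fin m) ℝ :=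
  Matrix.of fun x y => if x.1 = y.1 then F x.2 y.2 else K x.2 y.2

/-- Block matrix with diagonal blocks `Λ₁` and off-diagonal blocks `Λ₂ / N`. -/
noncomputable def blockPN (N n : ℕ) (Λ₁ Λ₂ : Matrix (Fin n) (Fin n) ℝ) :
    Matrix (Fin N × Fin n) (Fin N × Fin n) ℝ :=
  Matrix.of fun x y => if x.1 = y.1 then Λ₁ x.2 y.2 else Λ₂ x.2 y.2 / (N : ℝ)

/-- The permutation matrix exchanging the i-th and j-th block rows of `I_{Nn}`. -/
def Jswap (N n : ℕ) (i j : Fin N) : Matrix (Fin N × Fin n) (Fin N × Fin n) ℝ :=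
  Matrix.of fun x y => if y.1 = Equiv.swap i j x.1 ∧ y.2 = x.2 then 1 else 0

/-- `I_N ⊗ M`. -/
def kronIN (N : ℕ) {a b : ℕ} (M : Matrix (Fin a) (Fin b) ℝ) :
    Matrix (Fin N × Fin a) (Fin N × Fin b) ℝ :=
  Matrix.of fun x y => if x.1 = y.1 then M x.2 y.2 else 0

/-- `𝟏_{N×1} ⊗ M`. -/
def stackN (N : ℕ) {a b : ℕ} (M : Matrix (Fin a) (Fin b) ℝ) :
    Matrix (Fin N × Fin a) (Fin b) ℝ :=
  Matrix.of fun x y => M x.2 y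

/-- Data of the LQ mean field social optimization problem. -/
structure Params (n n₁ : ℕ) where
  A : Matrix (Fin n) (Fin n) ℝ
  G : Matrix (Fin n) (Fin n) ℝ
  Γ : Matrix (Fin n) (Fin n) ℝ
  Γf : Matrix (Fin n) (Fin n) ℝ
  B : Matrix (Fin n) (Fin n₁) ℝ
  B0 : Matrix (Fin n) (Fin n₁) ℝ
  B1 : Matrix (Fin n) (Fin n₁) ℝ
  D : Matrix (Fin n) (Fin 1) ℝ
  D0 : Matrix (Fin n) (Fin 1) ℝ
  Q : Matrix (Fin n) (Fin n) ℝ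
  Qf : Matrix (Fin n) (Fin n) ℝ
  R : Matrix (Fin n₁) (Fin n₁) ℝ
  T : ℝ

namespace Params

variable {n n₁ : ℕ} (p : Params n n₁)

/-- Standing hypotheses: positive dimensions, positive horizon, symmetric weights. -/
def Standing : Prop :=
  1 ≤ n ∧ 1 ≤ n₁ ∧ 0 < p.T ∧ p.Q.IsSymm ∧ p.Qf.IsSymm ∧ p.R.IsSymm

/-- Q^Γ = Γᵀ Q Γ − Q Γ − Γᵀ Q. -/
def QΓ : Matrix (Fin n) (Fin n) ℝ := p.Γᵀ * p.Q * p.Γ - p.Q * p.Γ - p.Γᵀ * p.Q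

/-- Q_f^Γ = Γ_fᵀ Q_f Γ_f − Q_f Γ_f − Γ_fᵀ Q_f. -/
def QfΓ : Matrix (Fin n) (Fin n) ℝ := p.Γfᵀ * p.Qf * p.Γf - p.Qf * p.Γf - p.Γfᵀ * p.Qf

/-- ℛ₁(Λ₁) = R + B₁ᵀ Λ₁ B₁. -/
def R1 (Λ₁ : Matrix (Fin n) (Fin n) ℝ) : Matrix (Fin n₁) (Fin n₁) ℝ :=
  p.R + p.B1ᵀ * Λ₁ * p.B1

/-- ℛ₂(Λ₁,Λ₂) = R + B₁ᵀ Λ₁ B₁ + B₀ᵀ(Λ₁+Λ₂)B₀. -/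
def R2 (Λ₁ Λ₂ : Matrix (Fin n) (Fin n) ℝ) : Matrix (Fin n₁) (Fin n₁) ℝ :=
  p.R + p.B1ᵀ * Λ₁ * p.B1 + p.B0ᵀ * (Λ₁ + Λ₂) * p.B0

/-- Ψ₁. -/
noncomputable def Ψ₁ (Λ₁ : Matrix (Fin n) (Fin n) ℝ) : Matrix (Fin n) (Fin n) ℝ :=
  Λ₁ * p.B * (p.R1 Λ₁)⁻¹ * p.Bᵀ * Λ₁ - Λ₁ * p.A - p.Aᵀ * Λ₁ - p.Q

/-- Ψ₂. -/
noncomputable def Ψ₂ (Λ₁ Λ₂ : Matrix (Fin n) (Fin n) ℝ) : Matrix (Fin n) (Fin n) ℝ :=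
  (Λ₁ + Λ₂) * p.B * (p.R2 Λ₁ Λ₂)⁻¹ * p.Bᵀ * (Λ₁ + Λ₂)
    - Λ₁ * p.B * (p.R1 Λ₁)⁻¹ * p.Bᵀ * Λ₁
    - (Λ₁ * p.G + Λ₂ * (p.A + p.G))
    - (p.Gᵀ * Λ₁ + (p.Aᵀ + p.Gᵀ) * Λ₂)
    - p.QΓ

/-- Solution of the limiting ODE system (ODE-Λ) on [0,T]. -/
noncomputable def IsSolLim (Λ₁ Λ₂ : ℝ → Matrix (Fin n) (Fin n) ℝ) : Prop :=
  (∀ t ∈ Icc (0 : ℝ) p.T, (Λ₁ t).IsSymm ∧ (Λ₂ t).IsSymm) ∧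
  (∀ t ∈ Icc (0 : ℝ) p.T, (p.R1 (Λ₁ t)).PosDef ∧ (p.R2 (Λ₁ t) (Λ₂ t)).PosDef) ∧
  Λ₁ p.T = p.Qf ∧ Λ₂ p.T = p.QfΓ ∧
  (∀ t ∈ Icc (0 : ℝ) p.T, ∀ i j, HasDerivWithinAt (fun s => Λ₁ s i j)
    (p.Ψ₁ (Λ₁ t) i j) (Icc (0 : ℝ) p.T) t) ∧
  (∀ t ∈ Icc (0 : ℝ) p.T, ∀ i j, HasDerivWithinAt (fun s => Λ₂ s i j)
    (p.Ψ₂ (Λ₁ t) (Λ₂ t) i j) (Icc (0 : ℝ) p.T) t)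

/-! Big (N-agent) matrices. -/

noncomputable def bigA (N : ℕ) : Matrix (Fin N × Fin n) (Fin N × Fin n) ℝ :=
  Matrix.of fun x y => (if x.1 = y.1 then p.A x.2 y.2 else 0) + p.G x.2 y.2 / (N : ℝ)

def bigBhat (N : ℕ) : Matrix (Fin N × Fin n) (Fin N × Fin n₁) ℝ :=
  Matrix.of fun x y => if x.1 = y.1 then p.B x.2 y.2 else 0

def bigB (N : ℕ) (i : Fin N) : Matrix (Fin N × Fin n) (Fin n₁) ℝ :=
  Matrix.of fun x l => if x.1 = i then p.B1 x.2 l else 0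

noncomputable def bigB0 (N : ℕ) : Matrix (Fin N × Fin n) (Fin n₁) ℝ :=
  Matrix.of fun x l => p.B0 x.2 l / (N : ℝ)

def bigD (N : ℕ) (i : Fin N) : Matrix (Fin N × Fin n) (Fin 1) ℝ :=
  Matrix.of fun x l => if x.1 = i then p.D x.2 l else 0

def bigD0 (N : ℕ) : Matrix (Fin N × Fin n) (Fin 1) ℝ :=
  Matrix.of fun x l => p.D0 x.2 l

def bigE (_p : Params n n₁) (N : ℕ) (i : Fin N) : Matrix (Fin n₁) (Fin N × Fin n₁) ℝ :=
  Matrix.of fun k y => if y.1 = i ∧ y.2 = k then 1 else 0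

def bigIhat (_p : Params n n₁) (N : ℕ) : Matrix (Fin n₁) (Fin N × Fin n₁) ℝ :=
  Matrix.of fun k y => if y.2 = k then 1 else 0

noncomputable def bigQ (N : ℕ) : Matrix (Fin N × Fin n) (Fin N × Fin n) ℝ :=
  Matrix.of fun x y => (if x.1 = y.1 then p.Q x.2 y.2 else 0) + p.QΓ x.2 y.2 / (N : ℝ)

noncomputable def bigQf (N : ℕ) : Matrix (Fin N × Fin n) (Fin N × Fin n) ℝ :=
  Matrix.of fun x y => (if x.1 = y.1 then p.Qf x.2 y.2 else 0) + p.QfΓ x.2 y.2 / (N : ℝ)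

def bigR (N : ℕ) : Matrix (Fin N × Fin n₁) (Fin N × Fin n₁) ℝ :=
  Matrix.of fun x y => if x.1 = y.1 then p.R x.2 y.2 else 0

/-- 𝓜₀. -/
noncomputable def M0 (N : ℕ) (Z : Matrix (Fin N × Fin n) (Fin N × Fin n) ℝ) :
    Matrix (Fin 1) (Fin 1) ℝ :=
  (1 / 2 : ℝ) • (∑ i : Fin N, (p.bigD N i)ᵀ * Z * p.bigD N i)
    + (1 / 2 : ℝ) • ((p.bigD0 N)ᵀ * Z * p.bigD0 N)

/-- 𝓜₁. -/
noncomputable def M1 (N : ℕ) (Z : Matrix (Fin N × Fin n) (Fin N × Fin n) ℝ) :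
    Matrix (Fin 1) (Fin N × Fin n₁) ℝ :=
  (∑ i : Fin N, (p.bigD N i)ᵀ * Z * p.bigB N i * p.bigE N i)
    + (p.bigD0 N)ᵀ * Z * p.bigB0 N * p.bigIhat N

/-- 𝓜₂. -/
noncomputable def M2 (N : ℕ) (Z : Matrix (Fin N × Fin n) (Fin N × Fin n) ℝ) :
    Matrix (Fin N × Fin n₁) (Fin N × Fin n₁) ℝ :=
  (1 / 2 : ℝ) • (∑ i : Fin N, (p.bigE N i)ᵀ * (p.bigB N i)ᵀ * Z * p.bigB N i * p.bigE N i)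
    + (1 / 2 : ℝ) • ((p.bigIhat N)ᵀ * (p.bigB0 N)ᵀ * Z * p.bigB0 N * p.bigIhat N)

/-- Right-hand side of the Riccati equation (ODE-P). -/
noncomputable def PRic (N : ℕ) (P : Matrix (Fin N × Fin n) (Fin N × Fin n) ℝ) :
    Matrix (Fin N × Fin n) (Fin N × Fin n) ℝ :=
  P * p.bigBhat N * (p.bigR N + (2 : ℝ) • p.M2 N P)⁻¹ * (p.bigBhat N)ᵀ * P
    - P * p.bigA N - (p.bigA N)ᵀ * P - p.bigQ N

/-- Solution of the large-scale Riccati equation (ODE-P) on [0,T]. -/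
noncomputable def IsSolP (N : ℕ) (P : ℝ → Matrix (Fin N × Fin n) (Fin N × Fin n) ℝ) : Prop :=
  (∀ t ∈ Icc (0 : ℝ) p.T, (P t).IsSymm) ∧
  (∀ t ∈ Icc (0 : ℝ) p.T, (p.bigR N + (2 : ℝ) • p.M2 N (P t)).PosDef) ∧
  P p.T = p.bigQf N ∧
  (∀ t ∈ Icc (0 : ℝ) p.T, ∀ x y, HasDerivWithinAt (fun s => P s x y)
    (p.PRic N (P t) x y) (Icc (0 : ℝ) p.T) t)

/-- Solution of the companion linear equation (ODE-S) on [0,T], relative to `P`. -/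
noncomputable def IsSolS (N : ℕ) (P : ℝ → Matrix (Fin N × Fin n) (Fin N × Fin n) ℝ)
    (S : ℝ → Matrix (Fin N × Fin n) (Fin 1) ℝ) : Prop :=
  S p.T = 0 ∧
  (∀ t ∈ Icc (0 : ℝ) p.T, ∀ x y, HasDerivWithinAt (fun s => S s x y)
    ((P t * p.bigBhat N * (p.bigR N + (2 : ℝ) • p.M2 N (P t))⁻¹ *
        ((p.bigBhat N)ᵀ * S t + (p.M1 N (P t))ᵀ) - (p.bigA N)ᵀ * S t) x y)
    (Icc (0 : ℝ) p.T) t)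

/-- Solution of the companion scalar equation (ODE-r) on [0,T], relative to `P` and `S`. -/
noncomputable def IsSolr (N : ℕ) (P : ℝ → Matrix (Fin N × Fin n) (Fin N × Fin n) ℝ)
    (S : ℝ → Matrix (Fin N × Fin n) (Fin 1) ℝ) (r : ℝ → ℝ) : Prop :=
  r p.T = 0 ∧
  (∀ t ∈ Icc (0 : ℝ) p.T, HasDerivWithinAt r
    (((((S t)ᵀ * p.bigBhat N + p.M1 N (P t)) * (p.bigR N + (2 : ℝ) • p.M2 N (P t))⁻¹ *
        ((p.bigBhat N)ᵀ * S t + (p.M1 N (P t))ᵀ)) - (2 : ℝ) • p.M0 N (P t)) 0 0)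
    (Icc (0 : ℝ) p.T) t)

/-- Asymptotic solvability of the LQ mean field social optimization problem. -/
noncomputable def AsympSolvable : Prop :=
  ∃ N₀ : ℕ, 1 ≤ N₀ ∧ ∃ c₀ : ℝ, 0 < c₀ ∧ ∃ C : ℝ,
    ∀ N : ℕ, N₀ ≤ N →
      ∃ P : ℝ → Matrix (Fin N × Fin n) (Fin N × Fin n) ℝ,
        p.IsSolP N P ∧
        (∀ t ∈ Icc (0 : ℝ) p.T, l1norm (P t) / (N : ℝ) ≤ C) ∧
        (∀ t ∈ Icc (0 : ℝ) p.T,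
          (p.bigR N + (2 : ℝ) • p.M2 N (P t) - c₀ • 1).PosSemidef)

/-! The rescaled low-dimensional system. -/

/-- E^N. -/
noncomputable def EN (N : ℕ) (Λ₁ Λ₂ : Matrix (Fin n) (Fin n) ℝ) :
    Matrix (Fin n₁) (Fin n₁) ℝ :=
  (1 / (N : ℝ)) •
    ((p.R2 Λ₁ Λ₂ - (1 / (N : ℝ)) • (p.B0ᵀ * Λ₂ * p.B0))⁻¹ - (p.R1 Λ₁)⁻¹)

/-- H^N. -/
noncomputable def HN (N : ℕ) (Λ₁ Λ₂ : Matrix (Fin n) (Fin n) ℝ) :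
    Matrix (Fin n₁) (Fin n₁) ℝ :=
  p.EN N Λ₁ Λ₂ + (p.R1 Λ₁)⁻¹

/-- g₁. -/
noncomputable def g₁ (N : ℕ) (Λ₁ Λ₂ : Matrix (Fin n) (Fin n) ℝ) :
    Matrix (Fin n) (Fin n) ℝ :=
  Λ₁ * p.B * p.EN N Λ₁ Λ₂ * p.Bᵀ * Λ₁
  + (1 - 1 / (N : ℝ)) •
      (Λ₂ * p.B * p.EN N Λ₁ Λ₂ * p.Bᵀ * Λ₁ + Λ₁ * p.B * p.EN N Λ₁ Λ₂ * p.Bᵀ * Λ₂)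
  + (1 / (N : ℝ) - 1 / (N : ℝ) ^ 2) •
      (Λ₂ * p.B * (p.HN N Λ₁ Λ₂ + ((N : ℝ) - 2) • p.EN N Λ₁ Λ₂) * p.Bᵀ * Λ₂)
  - (1 / (N : ℝ)) •
      ((Λ₁ * p.G + p.Gᵀ * Λ₁) + (1 - 1 / (N : ℝ)) • (Λ₂ * p.G + p.Gᵀ * Λ₂))
  - (1 / (N : ℝ)) • p.QΓ

/-- g₂. -/
noncomputable def g₂ (N : ℕ) (Λ₁ Λ₂ : Matrix (Fin n) (Fin n) ℝ) :
    Matrix (Fin n) (Fin n) ℝ :=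
  (Λ₁ + Λ₂) * p.B *
      ((N : ℝ) • p.EN N Λ₁ Λ₂ + (p.R1 Λ₁)⁻¹ - (p.R2 Λ₁ Λ₂)⁻¹) * p.Bᵀ * (Λ₁ + Λ₂)
  - (2 / (N : ℝ)) • (Λ₂ * p.B * (p.R1 Λ₁)⁻¹ * p.Bᵀ * Λ₂)
  + (1 / (N : ℝ) - 2) • (Λ₂ * p.B * p.EN N Λ₁ Λ₂ * p.Bᵀ * Λ₂)
  - Λ₁ * p.B * p.EN N Λ₁ Λ₂ * p.Bᵀ * Λ₂
  - Λ₂ * p.B * p.EN N Λ₁ Λ₂ * p.Bᵀ * Λ₁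
  + (1 / (N : ℝ)) • (Λ₂ * p.G + p.Gᵀ * Λ₂)

/-- Solution of the rescaled system (ODE-Λ^N) on [0,T]. -/
noncomputable def IsSolLamN (N : ℕ) (Λ₁ Λ₂ : ℝ → Matrix (Fin n) (Fin n) ℝ) : Prop :=
  (∀ t ∈ Icc (0 : ℝ) p.T, (Λ₁ t).IsSymm ∧ (Λ₂ t).IsSymm) ∧
  (∀ t ∈ Icc (0 : ℝ) p.T, (p.R1 (Λ₁ t)).PosDef ∧ (p.R2 (Λ₁ t) (Λ₂ t)).PosDef ∧
    (p.R2 (Λ₁ t) (Λ₂ t) - (1 / (N : ℝ)) • (p.B0ᵀ * Λ₂ t * p.B0)).PosDef) ∧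
  Λ₁ p.T = p.Qf + (1 / (N : ℝ)) • p.QfΓ ∧ Λ₂ p.T = p.QfΓ ∧
  (∀ t ∈ Icc (0 : ℝ) p.T, ∀ i j, HasDerivWithinAt (fun s => Λ₁ s i j)
    ((p.Ψ₁ (Λ₁ t) + p.g₁ N (Λ₁ t) (Λ₂ t)) i j) (Icc (0 : ℝ) p.T) t) ∧
  (∀ t ∈ Icc (0 : ℝ) p.T, ∀ i j, HasDerivWithinAt (fun s => Λ₂ s i j)
    ((p.Ψ₂ (Λ₁ t) (Λ₂ t) + p.g₂ N (Λ₁ t) (Λ₂ t)) i j) (Icc (0 : ℝ) p.T) t)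

/-! Companion (mean-field) equations. -/

/-- φ₁. -/
noncomputable def φ₁ (Λ₁ Λ₂ : Matrix (Fin n) (Fin n) ℝ) (S : Matrix (Fin n) (Fin 1) ℝ) :
    Matrix (Fin n) (Fin 1) ℝ :=
  (Λ₁ + Λ₂) * p.B * (p.R2 Λ₁ Λ₂)⁻¹ *
      (p.Bᵀ * S + p.B1ᵀ * Λ₁ * p.D + p.B0ᵀ * (Λ₁ + Λ₂) * p.D0)
    - (p.A + p.G)ᵀ * S

/-- φ₂. -/
noncomputable def φ₂ (Λ₁ Λ₂ : Matrix (Fin n) (Fin n) ℝ) (S : Matrix (Fin n) (Fin 1) ℝ) :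
    Matrix (Fin 1) (Fin 1) ℝ :=
  (Sᵀ * p.B + p.Dᵀ * Λ₁ * p.B1 + p.D0ᵀ * (Λ₁ + Λ₂) * p.B0) * (p.R2 Λ₁ Λ₂)⁻¹ *
      (p.Bᵀ * S + p.B1ᵀ * Λ₁ * p.D + p.B0ᵀ * (Λ₁ + Λ₂) * p.D0)
    - p.Dᵀ * Λ₁ * p.D - p.D0ᵀ * (Λ₁ + Λ₂) * p.D0

/-- Solution of the limiting companion system (ODE-Sr) on [0,T]. -/
noncomputable def IsSolSr (Λ₁ Λ₂ : ℝ → Matrix (Fin n) (Fin n) ℝ)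
    (S : ℝ → Matrix (Fin n) (Fin 1) ℝ) (r : ℝ → ℝ) : Prop :=
  S p.T = 0 ∧ r p.T = 0 ∧
  (∀ t ∈ Icc (0 : ℝ) p.T, ∀ i j, HasDerivWithinAt (fun s => S s i j)
    (p.φ₁ (Λ₁ t) (Λ₂ t) (S t) i j) (Icc (0 : ℝ) p.T) t) ∧
  (∀ t ∈ Icc (0 : ℝ) p.T, HasDerivWithinAt r
    ((p.φ₂ (Λ₁ t) (Λ₂ t) (S t)) 0 0) (Icc (0 : ℝ) p.T) t)

/-- g₀₁. -/
noncomputable def g01 (N : ℕ) (Λ₁ Λ₂ : Matrix (Fin n) (Fin n) ℝ)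
    (S : Matrix (Fin n) (Fin 1) ℝ) : Matrix (Fin n) (Fin 1) ℝ :=
  (Λ₁ + (1 - 1 / (N : ℝ)) • Λ₂) * p.B *
      (p.R2 Λ₁ Λ₂ - (1 / (N : ℝ)) • (p.B0ᵀ * Λ₂ * p.B0))⁻¹ *
      (p.Bᵀ * S + p.B1ᵀ * Λ₁ * p.D + p.B0ᵀ * (Λ₁ + (1 - 1 / (N : ℝ)) • Λ₂) * p.D0)
  - (Λ₁ + Λ₂) * p.B * (p.R2 Λ₁ Λ₂)⁻¹ *
      (p.Bᵀ * S + p.B1ᵀ * Λ₁ * p.D + p.B0ᵀ * (Λ₁ + Λ₂) * p.D0)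

/-- g₀₂. -/
noncomputable def g02 (N : ℕ) (Λ₁ Λ₂ : Matrix (Fin n) (Fin n) ℝ)
    (S : Matrix (Fin n) (Fin 1) ℝ) : Matrix (Fin 1) (Fin 1) ℝ :=
  (Sᵀ * p.B + p.Dᵀ * Λ₁ * p.B1 + p.D0ᵀ * (Λ₁ + (1 - 1 / (N : ℝ)) • Λ₂) * p.B0) *
      (p.R2 Λ₁ Λ₂ - (1 / (N : ℝ)) • (p.B0ᵀ * Λ₂ * p.B0))⁻¹ *
      (p.Bᵀ * S + p.B1ᵀ * Λ₁ * p.D + p.B0ᵀ * (Λ₁ + (1 - 1 / (N : ℝ)) • Λ₂) * p.D0)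
  - (Sᵀ * p.B + p.Dᵀ * Λ₁ * p.B1 + p.D0ᵀ * (Λ₁ + Λ₂) * p.B0) * (p.R2 Λ₁ Λ₂)⁻¹ *
      (p.Bᵀ * S + p.B1ᵀ * Λ₁ * p.D + p.B0ᵀ * (Λ₁ + Λ₂) * p.D0)
  + (1 / (N : ℝ)) • (p.D0ᵀ * Λ₂ * p.D0)

/-- Solution of the rescaled companion system (ODE-S^N r^N) on [0,T]. -/
noncomputable def IsSolSrN (N : ℕ) (Λ₁ Λ₂ : ℝ → Matrix (Fin n) (Fin n) ℝ)
    (S : ℝ → Matrix (Fin n) (Fin 1) ℝ) (r : ℝ → ℝ) : Prop :=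
  S p.T = 0 ∧ r p.T = 0 ∧
  (∀ t ∈ Icc (0 : ℝ) p.T, ∀ i j, HasDerivWithinAt (fun s => S s i j)
    ((p.φ₁ (Λ₁ t) (Λ₂ t) (S t) + p.g01 N (Λ₁ t) (Λ₂ t) (S t)) i j) (Icc (0 : ℝ) p.T) t) ∧
  (∀ t ∈ Icc (0 : ℝ) p.T, HasDerivWithinAt r
    ((p.φ₂ (Λ₁ t) (Λ₂ t) (S t) + p.g02 N (Λ₁ t) (Λ₂ t) (S t)) 0 0) (Icc (0 : ℝ) p.T) t)

/-! Feedback gains. -/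

/-- Θ = ℛ₁(Λ₁)⁻¹ Bᵀ Λ₁. -/
noncomputable def Theta (Λ₁ : Matrix (Fin n) (Fin n) ℝ) : Matrix (Fin n₁) (Fin n) ℝ :=
  (p.R1 Λ₁)⁻¹ * p.Bᵀ * Λ₁

/-- Θ₁ = (H₁ − H)Bᵀ(Λ₁+Λ₂) + HBᵀΛ₂. -/
noncomputable def Theta1 (Λ₁ Λ₂ : Matrix (Fin n) (Fin n) ℝ) : Matrix (Fin n₁) (Fin n) ℝ :=
  ((p.R2 Λ₁ Λ₂)⁻¹ - (p.R1 Λ₁)⁻¹) * p.Bᵀ * (Λ₁ + Λ₂) + (p.R1 Λ₁)⁻¹ * p.Bᵀ * Λ₂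

/-- Θ₂ = H₁[BᵀS + B₁ᵀΛ₁D + B₀ᵀ(Λ₁+Λ₂)D₀]. -/
noncomputable def Theta2 (Λ₁ Λ₂ : Matrix (Fin n) (Fin n) ℝ) (S : Matrix (Fin n) (Fin 1) ℝ) :
    Matrix (Fin n₁) (Fin 1) ℝ :=
  (p.R2 Λ₁ Λ₂)⁻¹ * (p.Bᵀ * S + p.B1ᵀ * Λ₁ * p.D + p.B0ᵀ * (Λ₁ + Λ₂) * p.D0)

/-- Θ^N. -/
noncomputable def ThetaN (N : ℕ) (Λ₁ Λ₂ : Matrix (Fin n) (Fin n) ℝ) :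
    Matrix (Fin n₁) (Fin n) ℝ :=
  (p.HN N Λ₁ Λ₂ - p.EN N Λ₁ Λ₂) * p.Bᵀ * (Λ₁ - (1 / (N : ℝ)) • Λ₂)

/-- Θ₁^N. -/
noncomputable def Theta1N (N : ℕ) (Λ₁ Λ₂ : Matrix (Fin n) (Fin n) ℝ) :
    Matrix (Fin n₁) (Fin n) ℝ :=
  (N : ℝ) • (p.EN N Λ₁ Λ₂ * p.Bᵀ * Λ₁)
    + (p.HN N Λ₁ Λ₂ + ((N : ℝ) - 2) • p.EN N Λ₁ Λ₂) * p.Bᵀ * Λ₂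

/-- Θ₂^N. -/
noncomputable def Theta2N (N : ℕ) (Λ₁ Λ₂ : Matrix (Fin n) (Fin n) ℝ)
    (S : Matrix (Fin n) (Fin 1) ℝ) : Matrix (Fin n₁) (Fin 1) ℝ :=
  (p.HN N Λ₁ Λ₂ + ((N : ℝ) - 1) • p.EN N Λ₁ Λ₂) *
    (p.Bᵀ * S + p.B1ᵀ * Λ₁ * p.D + p.B0ᵀ * (Λ₁ + (1 - 1 / (N : ℝ)) • Λ₂) * p.D0)

/-- Z₀ = −B₀(Θ + Θ₁). -/
noncomputable def Z0 (Λ₁ Λ₂ : Matrix (Fin n) (Fin n) ℝ) : Matrix (Fin n) (Fin n) ℝ :=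
  -(p.B0 * (p.Theta Λ₁ + p.Theta1 Λ₁ Λ₂))

/-- Z₁ = A + G − B(Θ + Θ₁). -/
noncomputable def Z1 (Λ₁ Λ₂ : Matrix (Fin n) (Fin n) ℝ) : Matrix (Fin n) (Fin n) ℝ :=
  p.A + p.G - p.B * (p.Theta Λ₁ + p.Theta1 Λ₁ Λ₂)

/-! The high-dimensional equations under the decentralized control. -/

/-- RHS of (ODE-P̌₁) (paper's −d𝐏̌₁/dt). -/
noncomputable def Pcheck1RHS (N : ℕ) (Θ : Matrix (Fin n₁) (Fin n) ℝ)
    (P1 : Matrix (Fin N × Fin n) (Fin N × Fin n) ℝ) :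
    Matrix (Fin N × Fin n) (Fin N × Fin n) ℝ :=
  (kronIN N Θ)ᵀ * (p.bigR N + p.M2 N ((2 : ℝ) • P1)) * kronIN N Θ
    + P1 * (p.bigA N - p.bigBhat N * kronIN N Θ)
    + (p.bigA N - p.bigBhat N * kronIN N Θ)ᵀ * P1
    + p.bigQ N

/-- Solution of (ODE-P̌₁) on [0,T], with Θ(t) built from Λ₁(t). -/
noncomputable def IsSolPcheck1 (N : ℕ) (Λ₁ : ℝ → Matrix (Fin n) (Fin n) ℝ)
    (P1 : ℝ → Matrix (Fin N × Fin n) (Fin N × Fin n) ℝ) : Prop :=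
  P1 p.T = p.bigQf N ∧
  (∀ t ∈ Icc (0 : ℝ) p.T, ∀ x y, HasDerivWithinAt (fun s => P1 s x y)
    ((-(p.Pcheck1RHS N (p.Theta (Λ₁ t)) (P1 t))) x y) (Icc (0 : ℝ) p.T) t)

/-- RHS of (ODE-P̌₁₂) (paper's −d𝐏̌₁₂/dt). -/
noncomputable def Pcheck12RHS (N : ℕ) (Λ₁m Λ₂m : Matrix (Fin n) (Fin n) ℝ)
    (P1 : Matrix (Fin N × Fin n) (Fin N × Fin n) ℝ)
    (P12 : Matrix (Fin N × Fin n) (Fin n) ℝ) :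
    Matrix (Fin N × Fin n) (Fin n) ℝ :=
  (kronIN N (p.Theta Λ₁m))ᵀ * (p.bigR N + p.M2 N ((2 : ℝ) • P1)) *
      stackN N (p.Theta1 Λ₁m Λ₂m)
    - P1 * p.bigBhat N * stackN N (p.Theta1 Λ₁m Λ₂m)
    + ((p.bigA N)ᵀ - (kronIN N (p.Theta Λ₁m))ᵀ * (p.bigBhat N)ᵀ) * P12
    + P12 * p.Z1 Λ₁m Λ₂m
    - (kronIN N (p.Theta Λ₁m))ᵀ * (p.bigIhat N)ᵀ * (p.bigB0 N)ᵀ * P12 * p.Z0 Λ₁m Λ₂m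

/-- Solution of (ODE-P̌₁₂) on [0,T]. -/
noncomputable def IsSolPcheck12 (N : ℕ) (Λ₁ Λ₂ : ℝ → Matrix (Fin n) (Fin n) ℝ)
    (P1 : ℝ → Matrix (Fin N × Fin n) (Fin N × Fin n) ℝ)
    (P12 : ℝ → Matrix (Fin N × Fin n) (Fin n) ℝ) : Prop :=
  P12 p.T = 0 ∧
  (∀ t ∈ Icc (0 : ℝ) p.T, ∀ x y, HasDerivWithinAt (fun s => P12 s x y)
    ((-(p.Pcheck12RHS N (Λ₁ t) (Λ₂ t) (P1 t) (P12 t))) x y) (Icc (0 : ℝ) p.T) t)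

/-! The decentralized-control low-dimensional coefficient system. -/

/-- ǧ₁. -/
noncomputable def gc1 (N : ℕ) (Θ : Matrix (Fin n₁) (Fin n) ℝ)
    (L1 L2 : Matrix (Fin n) (Fin n) ℝ) : Matrix (Fin n) (Fin n) ℝ :=
  (1 / (N : ℝ)) •
    (Θᵀ * p.B0ᵀ * (L1 + (1 - 1 / (N : ℝ)) • L2) * p.B0 * Θ
      + (L1 + (1 - 1 / (N : ℝ)) • L2) * p.G
      + p.Gᵀ * (L1 + (1 - 1 / (N : ℝ)) • L2)
      + p.QΓ)

/-- ǧ₂. -/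
noncomputable def gc2 (N : ℕ) (Θ : Matrix (Fin n₁) (Fin n) ℝ)
    (L2 : Matrix (Fin n) (Fin n) ℝ) : Matrix (Fin n) (Fin n) ℝ :=
  -((1 / (N : ℝ)) • (Θᵀ * p.B0ᵀ * L2 * p.B0 * Θ + L2 * p.G + p.Gᵀ * L2))

/-- ǧ₁₂. -/
noncomputable def gc12 (N : ℕ) (Θ Θ₁ : Matrix (Fin n₁) (Fin n) ℝ)
    (L2 : Matrix (Fin n) (Fin n) ℝ) : Matrix (Fin n) (Fin n) ℝ :=
  (1 / (N : ℝ)) • (-(Θᵀ * p.B0ᵀ * L2 * p.B0 * Θ₁) + L2 * p.B * Θ₁)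

/-- ǧ₂₂. -/
noncomputable def gc22 (N : ℕ) (Θ₁ : Matrix (Fin n₁) (Fin n) ℝ)
    (L2 : Matrix (Fin n) (Fin n) ℝ) : Matrix (Fin n) (Fin n) ℝ :=
  -((1 / (N : ℝ)) • (Θ₁ᵀ * p.B0ᵀ * L2 * p.B0 * Θ₁))

/-- ǧ₀₁. -/
noncomputable def gc01 (N : ℕ) (Θ : Matrix (Fin n₁) (Fin n) ℝ)
    (Θ₂ : Matrix (Fin n₁) (Fin 1) ℝ) (L2 : Matrix (Fin n) (Fin n) ℝ) :
    Matrix (Fin n) (Fin 1) ℝ :=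
  (1 / (N : ℝ)) • (Θᵀ * p.B0ᵀ * L2 * (p.D0 - p.B0 * Θ₂) + L2 * p.B * Θ₂)

/-- ǧ₀₂. -/
noncomputable def gc02 (N : ℕ) (Θ₁ : Matrix (Fin n₁) (Fin n) ℝ)
    (Θ₂ : Matrix (Fin n₁) (Fin 1) ℝ) (L2 : Matrix (Fin n) (Fin n) ℝ) :
    Matrix (Fin n) (Fin 1) ℝ :=
  (1 / (N : ℝ)) • (-(Θ₁ᵀ * p.B0ᵀ * L2 * p.B0 * Θ₂) + Θ₁ᵀ * p.B0ᵀ * L2 * p.D0)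

/-- RHS of (ODE-Λ̌₁^N) (paper's −dΛ̌₁^N/dt). -/
noncomputable def check1RHS (N : ℕ) (Θ : Matrix (Fin n₁) (Fin n) ℝ)
    (L1 L2 : Matrix (Fin n) (Fin n) ℝ) : Matrix (Fin n) (Fin n) ℝ :=
  Θᵀ * p.R1 L1 * Θ + L1 * (p.A - p.B * Θ) + (p.A - p.B * Θ)ᵀ * L1 + p.Q
    + p.gc1 N Θ L1 L2

/-- RHS of (ODE-Λ̌₂^N). -/
noncomputable def check2RHS (N : ℕ) (Θ : Matrix (Fin n₁) (Fin n) ℝ)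
    (L1 L2 : Matrix (Fin n) (Fin n) ℝ) : Matrix (Fin n) (Fin n) ℝ :=
  Θᵀ * p.B0ᵀ * (L1 + L2) * p.B0 * Θ + L1 * p.G + p.Gᵀ * L1
    + L2 * (p.A + p.G - p.B * Θ) + (p.A + p.G - p.B * Θ)ᵀ * L2 + p.QΓ
    + p.gc2 N Θ L2

/-- RHS of (ODE-Λ̌₁₂^N). -/
noncomputable def check12RHS (N : ℕ) (Θ Θ₁ : Matrix (Fin n₁) (Fin n) ℝ)
    (L1 L2 L12 : Matrix (Fin n) (Fin n) ℝ) : Matrix (Fin n) (Fin n) ℝ :=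
  Θᵀ * p.R2 L1 L2 * Θ₁ + Θᵀ * p.B0ᵀ * L12 * p.B0 * (Θ + Θ₁)
    - (L1 + L2) * p.B * Θ₁
    + (p.A + p.G - p.B * Θ)ᵀ * L12
    + L12 * (p.A + p.G - p.B * (Θ₁ + Θ))
    + p.gc12 N Θ Θ₁ L2

/-- RHS of (ODE-Λ̌₂₂^N). -/
noncomputable def check22RHS (N : ℕ) (Θ₁ : Matrix (Fin n₁) (Fin n) ℝ)
    (Z₀ Z₁ : Matrix (Fin n) (Fin n) ℝ)
    (L1 L2 L12 L22 : Matrix (Fin n) (Fin n) ℝ) : Matrix (Fin n) (Fin n) ℝ :=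
  Θ₁ᵀ * p.R2 L1 L2 * Θ₁ - L12ᵀ * p.B * Θ₁ - Θ₁ᵀ * p.Bᵀ * L12
    + L22 * Z₁ + Z₁ᵀ * L22
    - Z₀ᵀ * L12ᵀ * p.B0 * Θ₁ - Θ₁ᵀ * p.B0ᵀ * L12 * Z₀
    + Z₀ᵀ * L22 * Z₀ + p.gc22 N Θ₁ L2

/-- RHS of (ODE-Š₁^N). -/
noncomputable def checkS1RHS (N : ℕ) (Θ : Matrix (Fin n₁) (Fin n) ℝ)
    (Θ₂ : Matrix (Fin n₁) (Fin 1) ℝ) (L1 L2 L12 : Matrix (Fin n) (Fin n) ℝ)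
    (S1 : Matrix (Fin n) (Fin 1) ℝ) : Matrix (Fin n) (Fin 1) ℝ :=
  Θᵀ * p.R2 L1 L2 * Θ₂ - (L1 + L2 + L12) * p.B * Θ₂
    - Θᵀ * (p.Bᵀ * S1 + p.B1ᵀ * L1 * p.D + p.B0ᵀ * (L1 + L2) * p.D0)
    - Θᵀ * p.B0ᵀ * L12 * (p.D0 - p.B0 * Θ₂)
    + (p.A + p.G)ᵀ * S1
    + p.gc01 N Θ Θ₂ L2

/-- RHS of (ODE-Š₂^N). -/
noncomputable def checkS2RHS (N : ℕ) (Θ₁ : Matrix (Fin n₁) (Fin n) ℝ)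
    (Θ₂ : Matrix (Fin n₁) (Fin 1) ℝ) (Z₀ Z₁ : Matrix (Fin n) (Fin n) ℝ)
    (L1 L2 L12 L22 : Matrix (Fin n) (Fin n) ℝ)
    (S1 S2 : Matrix (Fin n) (Fin 1) ℝ) : Matrix (Fin n) (Fin 1) ℝ :=
  Θ₁ᵀ * p.R2 L1 L2 * Θ₂ + Z₁ᵀ * S2
    - Θ₁ᵀ * (p.Bᵀ * S1 + p.B1ᵀ * L1 * p.D + p.B0ᵀ * (L1 + L2) * p.D0)
    + (Z₀ᵀ * L22 + Z₀ᵀ * L12ᵀ - Θ₁ᵀ * p.B0ᵀ * L12) * (p.D0 - p.B0 * Θ₂)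
    - (L12ᵀ + L22) * p.B * Θ₂
    + p.gc02 N Θ₁ Θ₂ L2

/-- Solution of the pair (ODE-Λ̌₁^N)–(ODE-Λ̌₂^N) on [0,T], with Θ(t) from the limiting Λ₁. -/
noncomputable def IsSolCheckA (N : ℕ) (Λ₁ : ℝ → Matrix (Fin n) (Fin n) ℝ)
    (L1 L2 : ℝ → Matrix (Fin n) (Fin n) ℝ) : Prop :=
  L1 p.T = p.Qf + (1 / (N : ℝ)) • p.QfΓ ∧ L2 p.T = p.QfΓ ∧
  (∀ t ∈ Icc (0 : ℝ) p.T, ∀ i j, HasDerivWithinAt (fun s => L1 s i j)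
    ((-(p.check1RHS N (p.Theta (Λ₁ t)) (L1 t) (L2 t))) i j) (Icc (0 : ℝ) p.T) t) ∧
  (∀ t ∈ Icc (0 : ℝ) p.T, ∀ i j, HasDerivWithinAt (fun s => L2 s i j)
    ((-(p.check2RHS N (p.Theta (Λ₁ t)) (L1 t) (L2 t))) i j) (Icc (0 : ℝ) p.T) t)

/-- Solution of (ODE-Λ̌₁^N)–(ODE-Λ̌₂₂^N) on [0,T], with Θ, Θ₁, Z₀, Z₁ from the limiting (Λ₁, Λ₂). -/
noncomputable def IsSolCheckB (N : ℕ) (Λ₁ Λ₂ : ℝ → Matrix (Fin n) (Fin n) ℝ)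
    (L1 L2 L12 L22 : ℝ → Matrix (Fin n) (Fin n) ℝ) : Prop :=
  p.IsSolCheckA N Λ₁ L1 L2 ∧
  L12 p.T = 0 ∧ L22 p.T = 0 ∧
  (∀ t ∈ Icc (0 : ℝ) p.T, ∀ i j, HasDerivWithinAt (fun s => L12 s i j)
    ((-(p.check12RHS N (p.Theta (Λ₁ t)) (p.Theta1 (Λ₁ t) (Λ₂ t))
        (L1 t) (L2 t) (L12 t))) i j) (Icc (0 : ℝ) p.T) t) ∧
  (∀ t ∈ Icc (0 : ℝ) p.T, ∀ i j, HasDerivWithinAt (fun s => L22 s i j)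
    ((-(p.check22RHS N (p.Theta1 (Λ₁ t) (Λ₂ t)) (p.Z0 (Λ₁ t) (Λ₂ t))
        (p.Z1 (Λ₁ t) (Λ₂ t)) (L1 t) (L2 t) (L12 t) (L22 t))) i j) (Icc (0 : ℝ) p.T) t)

/-- Solution of the full decentralized coefficient system on [0,T],
with Θ, Θ₁, Θ₂, Z₀, Z₁ from the limiting (Λ₁, Λ₂, S). -/
noncomputable def IsSolCheckC (N : ℕ) (Λ₁ Λ₂ : ℝ → Matrix (Fin n) (Fin n) ℝ)
    (S : ℝ → Matrix (Fin n) (Fin 1) ℝ)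
    (L1 L2 L12 L22 : ℝ → Matrix (Fin n) (Fin n) ℝ)
    (S1 S2 : ℝ → Matrix (Fin n) (Fin 1) ℝ) : Prop :=
  p.IsSolCheckB N Λ₁ Λ₂ L1 L2 L12 L22 ∧
  S1 p.T = 0 ∧ S2 p.T = 0 ∧
  (∀ t ∈ Icc (0 : ℝ) p.T, ∀ i j, HasDerivWithinAt (fun s => S1 s i j)
    ((-(p.checkS1RHS N (p.Theta (Λ₁ t)) (p.Theta2 (Λ₁ t) (Λ₂ t) (S t))
        (L1 t) (L2 t) (L12 t) (S1 t))) i j) (Icc (0 : ℝ) p.T) t) ∧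
  (∀ t ∈ Icc (0 : ℝ) p.T, ∀ i j, HasDerivWithinAt (fun s => S2 s i j)
    ((-(p.checkS2RHS N (p.Theta1 (Λ₁ t) (Λ₂ t)) (p.Theta2 (Λ₁ t) (Λ₂ t) (S t))
        (p.Z0 (Λ₁ t) (Λ₂ t)) (p.Z1 (Λ₁ t) (Λ₂ t))
        (L1 t) (L2 t) (L12 t) (L22 t) (S1 t) (S2 t))) i j) (Icc (0 : ℝ) p.T) t)

end Params

lemma sum_if_one_aux (N : ℕ) (i : Fin N) (x y : ℝ) :
    ∑ k : Fin N, (if k = i then x else y) = x + ((N : ℝ) - 1) * y := by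
  have h : ∀ k : Fin N, (if k = i then x else y) = (if k = i then x - y else 0) + y := by
    intro k; by_cases h : k = i <;> simp [h]
  simp only [h, Finset.sum_add_distrib, Finset.sum_ite_eq' Finset.univ, Finset.mem_univ,
    if_true, Finset.sum_const, Finset.card_univ, Fintype.card_fin, nsmul_eq_mul]
  ring

lemma sum_if_two_aux (N : ℕ) (i j : Fin N) (hij : i ≠ j) (x y z : ℝ) :
    ∑ k : Fin N, (if k = i then x else if k = j then y else z)
      = x + y + ((N : ℝ) - 2) * z := by
  have h : ∀ k : Fin N, (if k = i then x else if k = j then y else z)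
      = (if k = i then x - z else 0) + (if k = j then y - z else 0) + z := by
    intro k
    by_cases h1 : k = i
    · subst h1; simp [hij]
    · by_cases h2 : k = j
      · subst h2; simp [h1, Ne.symm hij]
      · simp [h1, h2]
  simp only [h, Finset.sum_add_distrib, Finset.sum_ite_eq' Finset.univ, Finset.mem_univ,
    if_true, Finset.sum_const, Finset.card_univ, Fintype.card_fin, nsmul_eq_mul]
  ring

/-- inverse of a block matrix with constant diagonal block F and constant
off-diagonal block K. -/
theorem blockConst_inverse (m N : ℕ) (hm : 1 ≤ m) (hN : 1 ≤ N)
    (F K : Matrix (Fin m) (Fin m) ℝ)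
    (h1 : IsUnit (F - K)) (h2 : IsUnit (F + ((N : ℝ) - 1) • K)) :
    IsUnit (blockConst N m F K) ∧
    (blockConst N m F K)⁻¹ =
      blockConst N m
        ((1 / (N : ℝ)) • ((F + ((N : ℝ) - 1) • K)⁻¹ - (F - K)⁻¹) + (F - K)⁻¹)
        ((1 / (N : ℝ)) • ((F + ((N : ℝ) - 1) • K)⁻¹ - (F - K)⁻¹)) := by
  have hN0 : (N : ℝ) ≠ 0 := Nat.cast_ne_zero.mpr (by omega)
  set S : Matrix (Fin m) (Fin m) ℝ := F + ((N : ℝ) - 1) • K with hSdef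
  set D : Matrix (Fin m) (Fin m) ℝ := F - K with hDdef
  set E : Matrix (Fin m) (Fin m) ℝ := (1 / (N : ℝ)) • (S⁻¹ - D⁻¹) with hEdef
  set H : Matrix (Fin m) (Fin m) ℝ := E + D⁻¹ with hHdef
  have hD : D * D⁻¹ = 1 :=
    Matrix.mul_nonsing_inv _ ((Matrix.isUnit_iff_isUnit_det _).mp h1)
  have hS : S * S⁻¹ = 1 :=
    Matrix.mul_nonsing_inv _ ((Matrix.isUnit_iff_isUnit_det _).mp h2)
  have hFD : F * D⁻¹ = 1 + K * D⁻¹ := by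
    have h' : F * D⁻¹ - K * D⁻¹ = 1 := by rw [← sub_mul]; exact hD
    rw [← h']; abel
  have hSD : S * D⁻¹ = 1 + (N : ℝ) • (K * D⁻¹) := by
    rw [hSdef, add_mul, smul_mul_assoc, hFD]
    module
  have hSE : S * E = (1 / (N : ℝ)) • (1 - S * D⁻¹) := by
    rw [hEdef, Matrix.mul_smul, mul_sub, hS]
  have key1 : F * H + ((N : ℝ) - 1) • (K * E) = 1 := by
    have h' : F * H + ((N : ℝ) - 1) • (K * E) = S * E + F * D⁻¹ := by
      rw [hHdef, mul_add, hSdef, add_mul, smul_mul_assoc]; abel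
    rw [h', hSE, hSD, hFD]
    match_scalars <;> field_simp <;> ring
  have key2 : F * E + K * H + ((N : ℝ) - 2) • (K * E) = 0 := by
    have h' : F * E + K * H + ((N : ℝ) - 2) • (K * E) = S * E + K * D⁻¹ := by
      rw [hHdef, mul_add, hSdef, add_mul, smul_mul_assoc]
      module
    rw [h', hSE, hSD]
    match_scalars <;> field_simp <;> ring
  have hMB : blockConst N m F K * blockConst N m H E = 1 := by
    ext ⟨i, a⟩ ⟨j, b⟩
    rw [Matrix.mul_apply, Fintype.sum_prod_type]
    simp only [blockConst, Matrix.of_apply]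
    have inner : ∀ k : Fin N,
        (∑ c, (if i = k then F a c else K a c) * (if k = j then H c b else E c b))
          = if i = k then (if k = j then (F * H) a b else (F * E) a b)
            else (if k = j then (K * H) a b else (K * E) a b) := by
      intro k
      by_cases hik : i = k <;> by_cases hkj : k = j <;>
        simp [hik, hkj, Matrix.mul_apply]
    rw [Finset.sum_congr rfl fun k _ => inner k]
    by_cases hij : i = j
    · subst hij
      have h' : ∀ k : Fin N,
          (if i = k then (if k = i then (F * H) a b else (F * E) a b)
            else (if k = i then (K * H) a b else (K * E) a b))
            = if k = i then (F * H) a b else (K * E) a b := by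
        intro k
        by_cases h : k = i
        · simp [h]
        · simp [h, Ne.symm h]
      rw [Finset.sum_congr rfl fun k _ => h' k, sum_if_one_aux]
      have := congrArg (fun M : Matrix (Fin m) (Fin m) ℝ => M a b) key1
      simp only [Matrix.add_apply, Matrix.smul_apply, smul_eq_mul] at this
      rw [this]
      simp [Matrix.one_apply, Prod.ext_iff]
    · have h' : ∀ k : Fin N,
          (if i = k then (if k = j then (F * H) a b else (F * E) a b)
            else (if k = j then (K * H) a b else (K * E) a b))
            = if k = i then (F * E) a b else if k = j then (K * H) a b else (K * E) a b := by
        intro k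
        by_cases h1 : k = i
        · subst h1; simp [hij]
        · simp [h1, Ne.symm h1]
      rw [Finset.sum_congr rfl fun k _ => h' k, sum_if_two_aux N i j hij]
      have := congrArg (fun M : Matrix (Fin m) (Fin m) ℝ => M a b) key2
      simp only [Matrix.add_apply, Matrix.smul_apply, smul_eq_mul, Matrix.zero_apply] at this
      have hrhs : (1 : Matrix (Fin N × Fin m) (Fin N × Fin m) ℝ) (i, a) (j, b) = 0 := by
        simp [Matrix.one_apply, Prod.ext_iff, hij]
      rw [hrhs, ← this]
  have hBM : blockConst N m H E * blockConst N m F K = 1 :=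
    mul_eq_one_comm.mp hMB
  exact ⟨⟨⟨_, _, hMB, hBM⟩, rfl⟩, Matrix.inv_eq_right_inv hMB⟩

end LQ
end

section
/- Suppose the limiting system (ODE-Λ) has a solution (Λ₁, Λ₂) on [0, T] and define Θ = ℛ₁(Λ₁)⁻¹BᵀΛ₁ and Θ̂ = I_N ⊗ Θ. Then for every N ≥ 1 the linear terminal value problem (ODE-P̌₁): −d𝐏̌₁/dt = Θ̂ᵀ(𝐑 + 𝓜₂(2𝐏̌₁))Θ̂ + 𝐏̌₁(𝐀 − 𝐁̂Θ̂) + (𝐀 − 𝐁̂Θ̂)ᵀ𝐏̌₁ + 𝐐 on [0,T], 𝐏̌₁(T) = 𝐐_f, has a unique solution 𝐏̌₁ : [0,T] → ℝ^{Nn×Nn}, and this solution has the two-block representation: there exist symmetric Π̌₁^N(t), Π̌₂^N(t) ∈ ℝ^{n×n} such that all diagonal n×n blocks of 𝐏̌₁(t) equal Π̌₁^N(t) and all off-diagonal n×n blocks of 𝐏̌₁(t) equal Π̌₂^N(t), for every t ∈ [0,T]. -/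
open Matrix Set

namespace LQ

/-! ### Auxiliary material for STATEMENT 15 -/

section ODEAux

open scoped NNReal

variable {E : Type*} [NormedAddCommGroup E] [NormedSpace ℝ E]

lemma lin_ode_local [CompleteSpace E] (v : ℝ → E → E) (a b : ℝ) (L : ℝ≥0)
    (hLip : ∀ t ∈ Icc a b, LipschitzWith L (v t))
    (hcont : ∀ x : E, ContinuousOn (fun t => v t x) (Icc a b))
    (c d : ℝ) (hcd : c ≤ d) (hc : a ≤ c) (hd : d ≤ b)
    (hsmall : (L : ℝ) * (d - c) ≤ 1 / 2) (x₁ : E) :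
    ∃ f : ℝ → E, f d = x₁ ∧ ∀ t ∈ Icc c d, HasDerivWithinAt f (v t (f t)) (Icc c d) t := by
  have hsub : Icc c d ⊆ Icc a b := Icc_subset_Icc hc hd
  obtain ⟨M0, hM0⟩ := (isCompact_Icc (a := a) (b := b)).exists_bound_of_continuousOn (hcont x₁)
  set M : ℝ := max M0 0 with hM
  have hMnn : 0 ≤ M := le_max_right _ _
  have hMb : ∀ t ∈ Icc a b, ‖v t x₁‖ ≤ M := fun t ht => (hM0 t ht).trans (le_max_left _ _)
  set R : ℝ := 2 * M * (d - c) with hR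
  have hRnn : 0 ≤ R := by
    have : 0 ≤ d - c := by linarith
    positivity
  set C : ℝ := M + L * R with hC
  have hCnn : 0 ≤ C := by positivity
  have hpl : IsPicardLindelof v (tmin := c) (tmax := d) ⟨d, hcd, le_rfl⟩ x₁ R.toNNReal 0
      C.toNNReal L := by
    constructor
    · exact fun t ht => (hLip t (hsub ht)).lipschitzOnWith
    · exact fun x _ => (hcont x).mono hsub
    · intro t ht x hx
      rw [Real.coe_toNNReal _ hCnn]
      have h1 : dist (v t x) (v t x₁) ≤ L * dist x x₁ := (hLip t (hsub ht)).dist_le_mul x x₁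
      have h2 : dist x x₁ ≤ R := by
        simpa [Real.coe_toNNReal _ hRnn] using Metric.mem_closedBall.mp hx
      have h3 : ‖v t x‖ ≤ ‖v t x₁‖ + dist (v t x) (v t x₁) := by
        rw [dist_eq_norm]
        have := norm_add_le (v t x₁) (v t x - v t x₁)
        simpa using this
      have h4 : (L : ℝ) * dist x x₁ ≤ L * R :=
        mul_le_mul_of_nonneg_left h2 (by positivity)
      have := hMb t (hsub ht)
      simp only [hC]
      linarith
    · simp only [NNReal.coe_zero, sub_zero, Real.coe_toNNReal _ hRnn, Real.coe_toNNReal _ hCnn]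
      show C * max (d - d) (d - c) ≤ R
      have hmax : max (d - d) (d - c) = d - c := by
        rw [sub_self]
        exact max_eq_right (by linarith)
      rw [hmax]
      have hdc : 0 ≤ d - c := by linarith
      have : C * (d - c) = M * (d - c) + (L : ℝ) * (d - c) * (2 * M * (d - c)) := by
        simp only [hC, hR]; ring
      rw [this, hR]
      nlinarith [mul_le_mul_of_nonneg_right hsmall
        (mul_nonneg (mul_nonneg (by norm_num : (0:ℝ) ≤ 2) hMnn) hdc)]
  exact hpl.exists_eq_forall_mem_Icc_hasDerivWithinAt₀

lemma hasDerivWithinAt_of_nmem_closure' {f : ℝ → E} {s : Set ℝ} {x : ℝ} {d : E}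
    (h : x ∉ closure s) : HasDerivWithinAt f d s x := by
  rw [hasDerivWithinAt_iff_hasFDerivWithinAt]
  exact HasFDerivWithinAt.of_notMem_closure h

lemma lin_ode_exists [CompleteSpace E] (v : ℝ → E → E) (a b : ℝ) (hab : a ≤ b) (L : ℝ≥0)
    (hLip : ∀ t ∈ Icc a b, LipschitzWith L (v t))
    (hcont : ∀ x : E, ContinuousOn (fun t => v t x) (Icc a b)) (x₀ : E) :
    ∃ f : ℝ → E, f b = x₀ ∧ ∀ t ∈ Icc a b, HasDerivWithinAt f (v t (f t)) (Icc a b) t := by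
  set k : ℕ := max 1 ⌈2 * (L : ℝ) * (b - a)⌉₊ with hk
  have hk1 : 1 ≤ k := le_max_left _ _
  have hkpos : (0 : ℝ) < k := by exact_mod_cast lt_of_lt_of_le one_pos hk1
  set h : ℝ := (b - a) / k with hh
  have hh0 : 0 ≤ h := div_nonneg (by linarith) hkpos.le
  have hkh : (k : ℝ) * h = b - a := by
    rw [hh]; field_simp
  have hLh : (L : ℝ) * h ≤ 1 / 2 := by
    have h2 : 2 * (L : ℝ) * (b - a) ≤ k :=
      le_trans (Nat.le_ceil _) (by exact_mod_cast Nat.le_max_right 1 _)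
    rw [hh, mul_div_assoc', div_le_div_iff₀ hkpos (by norm_num : (0:ℝ) < 2)]
    nlinarith
  have claim : ∀ j : ℕ, j ≤ k → ∃ f : ℝ → E, f b = x₀ ∧
      ∀ t ∈ Icc (b - j * h) b, HasDerivWithinAt f (v t (f t)) (Icc (b - j * h) b) t := by
    intro j
    induction j with
    | zero =>
      intro _
      obtain ⟨f, hf1, hf2⟩ := lin_ode_local v a b L hLip hcont b b le_rfl hab le_rfl
        (by simp) x₀
      exact ⟨f, hf1, by simpa using hf2⟩
    | succ j ih =>
      intro hjk
      obtain ⟨f, hfb, hf⟩ := ih (le_trans (Nat.le_succ j) hjk)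
      set d' : ℝ := b - j * h with hd'
      set c : ℝ := b - (j + 1 : ℕ) * h with hc
      have hcd' : c ≤ d' := by
        simp only [hc, hd']
        push_cast
        nlinarith
      have hd'b : d' ≤ b := by
        simp only [hd']
        nlinarith [mul_nonneg (Nat.cast_nonneg (α := ℝ) j) hh0]
      have hac : a ≤ c := by
        have hjh : ((j:ℝ) + 1) * h ≤ (k : ℝ) * h := by
          apply mul_le_mul_of_nonneg_right _ hh0
          exact_mod_cast hjk
        simp only [hc]
        push_cast
        linarith [hkh ▸ hjh]
      have hdc : d' - c = h := by simp only [hc, hd']; push_cast; ring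
      obtain ⟨g, hgd, hg⟩ := lin_ode_local v a b L hLip hcont c d' hcd' hac
        (le_trans hd'b le_rfl) (by rw [hdc]; exact hLh) (f d')
      set F : ℝ → E := fun t => if t < d' then g t else f t with hF
      have hFg : ∀ y ∈ Icc c d', F y = g y := by
        intro y hy
        by_cases hyd : y < d'
        · simp [hF, hyd]
        · have : y = d' := le_antisymm hy.2 (not_lt.mp hyd)
          simp [hF, this, hgd]
      have hFf : ∀ y ∈ Icc d' b, F y = f y := by
        intro y hy
        have : ¬ y < d' := not_lt.mpr hy.1
        simp [hF, this]
      refine ⟨F, ?_, ?_⟩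
      · rw [hFf b ⟨hd'b, le_rfl⟩, hfb]
      · intro t ht
        have h1 : HasDerivWithinAt F (v t (F t)) (Icc c d') t := by
          by_cases htd : t ≤ d'
          · have htm : t ∈ Icc c d' := ⟨ht.1, htd⟩
            rw [hFg t htm]
            exact (hg t htm).congr hFg (hFg t htm)
          · exact hasDerivWithinAt_of_nmem_closure'
              (by rw [IsClosed.closure_eq isClosed_Icc]; exact fun hmem => htd hmem.2)
        have h2 : HasDerivWithinAt F (v t (F t)) (Icc d' b) t := by
          by_cases htd : d' ≤ t
          · have htm : t ∈ Icc d' b := ⟨htd, ht.2⟩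
            rw [hFf t htm]
            exact (hf t htm).congr hFf (hFf t htm)
          · exact hasDerivWithinAt_of_nmem_closure'
              (by rw [IsClosed.closure_eq isClosed_Icc]; exact fun hmem => htd hmem.1)
        have := h1.union h2
        rwa [Icc_union_Icc_eq_Icc hcd' hd'b] at this
  obtain ⟨f, hfb, hf⟩ := claim k le_rfl
  have hbk : b - k * h = a := by rw [hkh]; ring
  rw [hbk] at hf
  exact ⟨f, hfb, hf⟩

lemma lin_ode_unique (v : ℝ → E → E) (a b : ℝ) (L : ℝ≥0)
    (hLip : ∀ t ∈ Icc a b, LipschitzWith L (v t)) (f g : ℝ → E)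
    (hf : ∀ t ∈ Icc a b, HasDerivWithinAt f (v t (f t)) (Icc a b) t)
    (hg : ∀ t ∈ Icc a b, HasDerivWithinAt g (v t (g t)) (Icc a b) t)
    (hfb : f b = g b) : ∀ t ∈ Icc a b, f t = g t := by
  rcases le_or_gt a b with hab | hab
  swap
  · intro t ht; exact absurd (ht.1.trans ht.2) (not_le.mpr hab)
  set w : ℝ → E → E := fun t => v (max a (min b t)) with hw
  have hmem : ∀ t : ℝ, max a (min b t) ∈ Icc a b :=
    fun t => ⟨le_max_left _ _, max_le hab (min_le_left _ _)⟩
  have hweq : ∀ t ∈ Icc a b, max a (min b t) = t := by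
    intro t ht
    rw [min_eq_right ht.2, max_eq_right ht.1]
  have hwLip : ∀ t, LipschitzOnWith L (w t) (univ : Set E) :=
    fun t => (hLip _ (hmem t)).lipschitzOnWith
  have hIic : ∀ t ∈ Ioc a b, Icc a b ∈ nhdsWithin t (Iic t) := by
    intro t ht
    have h1 : Iic t ∩ Ioi a ∈ nhdsWithin t (Iic t) :=
      Filter.inter_mem self_mem_nhdsWithin
        (mem_nhdsWithin_of_mem_nhds (Ioi_mem_nhds ht.1))
    exact Filter.mem_of_superset h1 (fun x hx => ⟨le_of_lt hx.2, hx.1.trans ht.2⟩)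
  have hf' : ∀ t ∈ Ioc a b, HasDerivWithinAt f (w t (f t)) (Iic t) t := by
    intro t ht
    have := (hf t (Ioc_subset_Icc_self ht)).mono_of_mem_nhdsWithin (hIic t ht)
    simpa [hw, hweq t (Ioc_subset_Icc_self ht)] using this
  have hg' : ∀ t ∈ Ioc a b, HasDerivWithinAt g (w t (g t)) (Iic t) t := by
    intro t ht
    have := (hg t (Ioc_subset_Icc_self ht)).mono_of_mem_nhdsWithin (hIic t ht)
    simpa [hw, hweq t (Ioc_subset_Icc_self ht)] using this
  have hcf : ContinuousOn f (Icc a b) := fun t ht => (hf t ht).continuousWithinAt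
  have hcg : ContinuousOn g (Icc a b) := fun t ht => (hg t ht).continuousWithinAt
  exact fun t ht =>
    ODE_solution_unique_of_mem_Icc_left (fun t _ => hwLip t) hcf hf' (fun _ _ => mem_univ _)
      hcg hg' (fun _ _ => mem_univ _) hfb ht

lemma affine_lipschitz [FiniteDimensional ℝ E] (v : ℝ → E → E) (a b : ℝ)
    (hlin : ∀ t ∈ Icc a b, IsLinearMap ℝ (fun w => v t w - v t 0))
    (hcont : ∀ x : E, ContinuousOn (fun t => v t x) (Icc a b)) :
    ∃ L : ℝ≥0, ∀ t ∈ Icc a b, LipschitzWith L (v t) := by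
  classical
  set B := Module.finBasis ℝ E with hB
  have hex : ∀ i, ∃ M : ℝ, 0 ≤ M ∧ ∀ t ∈ Icc a b, ‖v t (B i) - v t 0‖ ≤ M := by
    intro i
    obtain ⟨M, hM⟩ := (isCompact_Icc (a := a) (b := b)).exists_bound_of_continuousOn
      (((hcont (B i)).sub (hcont 0)))
    exact ⟨max M 0, le_max_right _ _, fun t ht => (hM t ht).trans (le_max_left _ _)⟩
  choose M hM0 hM using hex
  set coordC : _ → (E →L[ℝ] ℝ) := fun i => LinearMap.toContinuousLinearMap (B.coord i)
    with hcoordC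
  set L₀ : ℝ := ∑ i, ‖coordC i‖ * M i with hL₀
  have hL₀0 : 0 ≤ L₀ :=
    Finset.sum_nonneg fun i _ => mul_nonneg (norm_nonneg _) (hM0 i)
  refine ⟨L₀.toNNReal, fun t ht => LipschitzWith.of_dist_le_mul fun x y => ?_⟩
  set ℓ : E →ₗ[ℝ] E := IsLinearMap.mk' _ (hlin t ht) with hℓ
  have hℓapp : ∀ w, ℓ w = v t w - v t 0 := fun w => rfl
  have key : v t x - v t y = ℓ (x - y) := by
    rw [map_sub, hℓapp, hℓapp]; abel
  have hrepr : ℓ (x - y) = ∑ i, B.repr (x - y) i • ℓ (B i) := by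
    conv_lhs => rw [← B.sum_repr (x - y)]
    rw [map_sum]
    simp [_root_.map_smul]
  have hbound : ‖ℓ (x - y)‖ ≤ L₀ * ‖x - y‖ := by
    rw [hrepr]
    calc ‖∑ i, B.repr (x - y) i • ℓ (B i)‖ ≤ ∑ i, ‖B.repr (x - y) i • ℓ (B i)‖ :=
          norm_sum_le _ _
    _ ≤ ∑ i, (‖coordC i‖ * ‖x - y‖) * M i := by
        apply Finset.sum_le_sum
        intro i _
        rw [norm_smul]
        have h1 : ‖B.repr (x - y) i‖ ≤ ‖coordC i‖ * ‖x - y‖ := by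
          have := (coordC i).le_opNorm (x - y)
          simpa [hcoordC] using this
        have h2 : ‖ℓ (B i)‖ ≤ M i := by rw [hℓapp]; exact hM i t ht
        exact mul_le_mul h1 h2 (norm_nonneg _) (by positivity)
    _ = L₀ * ‖x - y‖ := by rw [hL₀, Finset.sum_mul]; congr 1; ext i; ring
  rw [dist_eq_norm, dist_eq_norm, key]
  calc ‖ℓ (x - y)‖ ≤ L₀ * ‖x - y‖ := hbound
  _ = (L₀.toNNReal : ℝ) * ‖x - y‖ := by rw [Real.coe_toNNReal _ hL₀0]

end ODEAux

section ContAux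

variable {ι κ γ : Type*} [Fintype ι] [Fintype κ] [Fintype γ] {s : Set ℝ}

lemma cOn_entry {f : ℝ → Matrix ι κ ℝ} (hf : ContinuousOn f s) (i : ι) (j : κ) :
    ContinuousOn (fun t => f t i j) s := by
  have heq : (fun t => f t i j)
      = ((fun g : κ → ℝ => g j) ∘ (fun M : Matrix ι κ ℝ => M i)) ∘ f := rfl
  rw [heq]
  exact ((continuous_apply j).comp (continuous_apply i)).comp_continuousOn hf

lemma cOn_matrix {f : ℝ → Matrix ι κ ℝ} (hf : ∀ i j, ContinuousOn (fun t => f t i j) s) :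
    ContinuousOn f s := by
  intro x hx
  exact continuousWithinAt_pi.2 fun i => continuousWithinAt_pi.2 fun j => hf i j x hx

lemma cOn_mul [DecidableEq κ] {f : ℝ → Matrix ι κ ℝ} {g : ℝ → Matrix κ γ ℝ}
    (hf : ContinuousOn f s) (hg : ContinuousOn g s) :
    ContinuousOn (fun t => f t * g t) s := by
  apply cOn_matrix
  intro i j
  simp only [Matrix.mul_apply]
  exact continuousOn_finset_sum _ fun k _ => (cOn_entry hf i k).mul (cOn_entry hg k j)

lemma cOn_add {f g : ℝ → Matrix ι κ ℝ}
    (hf : ContinuousOn f s) (hg : ContinuousOn g s) :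
    ContinuousOn (fun t => f t + g t) s := by
  apply cOn_matrix
  intro i j
  exact (cOn_entry hf i j).add (cOn_entry hg i j)

lemma cOn_sub {f g : ℝ → Matrix ι κ ℝ}
    (hf : ContinuousOn f s) (hg : ContinuousOn g s) :
    ContinuousOn (fun t => f t - g t) s := by
  apply cOn_matrix
  intro i j
  exact (cOn_entry hf i j).sub (cOn_entry hg i j)

lemma cOn_neg {f : ℝ → Matrix ι κ ℝ} (hf : ContinuousOn f s) :
    ContinuousOn (fun t => -(f t)) s := by
  apply cOn_matrix
  intro i j
  exact (cOn_entry hf i j).neg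

lemma cOn_transpose {f : ℝ → Matrix ι κ ℝ} (hf : ContinuousOn f s) :
    ContinuousOn (fun t => (f t)ᵀ) s := by
  apply cOn_matrix
  intro i j
  exact cOn_entry hf j i

lemma cOn_smul {c : ℝ} {f : ℝ → Matrix ι κ ℝ} (hf : ContinuousOn f s) :
    ContinuousOn (fun t => c • f t) s := by
  apply cOn_matrix
  intro i j
  exact (cOn_entry hf i j).const_smul c

lemma cOn_inv [DecidableEq ι] {f : ℝ → Matrix ι ι ℝ} (hf : ContinuousOn f s)
    (hdet : ∀ t ∈ s, (f t).det ≠ 0) :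
    ContinuousOn (fun t => (f t)⁻¹) s := by
  have h1 : ContinuousOn (fun t => (f t).det) s :=
    (continuous_id.matrix_det).comp_continuousOn hf
  have h2 : ContinuousOn (fun t => (f t).adjugate) s :=
    (continuous_id.matrix_adjugate).comp_continuousOn hf
  refine ContinuousOn.congr ((h1.inv₀ hdet).smul h2) ?_
  intro t ht
  show (f t)⁻¹ = ((f t).det)⁻¹ • (f t).adjugate
  rw [Matrix.inv_def, Ring.inverse_eq_inv]

end ContAux

section BConj

variable {N : ℕ} {α β γ : Type*}

/-- Simultaneous permutation of the block index in rows and columns. -/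
def bconj (σ : Equiv.Perm (Fin N)) (M : Matrix (Fin N × α) (Fin N × β) ℝ) :
    Matrix (Fin N × α) (Fin N × β) ℝ :=
  Matrix.of fun x y => M (σ x.1, x.2) (σ y.1, y.2)

@[simp] lemma bconj_apply (σ : Equiv.Perm (Fin N)) (M : Matrix (Fin N × α) (Fin N × β) ℝ)
    (x y) : bconj σ M x y = M (σ x.1, x.2) (σ y.1, y.2) := rfl

lemma bconj_add (σ : Equiv.Perm (Fin N)) (M M' : Matrix (Fin N × α) (Fin N × β) ℝ) :
    bconj σ (M + M') = bconj σ M + bconj σ M' := rfl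

lemma bconj_sub (σ : Equiv.Perm (Fin N)) (M M' : Matrix (Fin N × α) (Fin N × β) ℝ) :
    bconj σ (M - M') = bconj σ M - bconj σ M' := rfl

lemma bconj_neg (σ : Equiv.Perm (Fin N)) (M : Matrix (Fin N × α) (Fin N × β) ℝ) :
    bconj σ (-M) = -(bconj σ M) := rfl

lemma bconj_smul (σ : Equiv.Perm (Fin N)) (c : ℝ) (M : Matrix (Fin N × α) (Fin N × β) ℝ) :
    bconj σ (c • M) = c • bconj σ M := rfl

lemma bconj_transpose (σ : Equiv.Perm (Fin N)) (M : Matrix (Fin N × α) (Fin N × β) ℝ) :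
    (bconj σ M)ᵀ = bconj σ Mᵀ := rfl

lemma bconj_sum {ι : Type*} (σ : Equiv.Perm (Fin N)) (f : ι → Matrix (Fin N × α) (Fin N × β) ℝ)
    (s : Finset ι) : bconj σ (∑ i ∈ s, f i) = ∑ i ∈ s, bconj σ (f i) := by
  ext x y
  simp only [bconj_apply, Matrix.sum_apply]

lemma bconj_mul [Fintype α] [Fintype β] [Fintype γ]
    (σ : Equiv.Perm (Fin N)) (M : Matrix (Fin N × α) (Fin N × β) ℝ)
    (M' : Matrix (Fin N × β) (Fin N × γ) ℝ) :
    bconj σ (M * M') = bconj σ M * bconj σ M' := by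
  ext x y
  simp only [bconj_apply, Matrix.mul_apply]
  exact (Fintype.sum_equiv (Equiv.prodCongr σ (Equiv.refl β))
    (fun z => bconj σ M x z * bconj σ M' z y)
    (fun z => M (σ x.1, x.2) z * M' z (σ y.1, y.2)) (fun z => rfl)).symm

end BConj

namespace Params

variable {n n₁ : ℕ} (p : Params n n₁) {N : ℕ}

/-! #### Linearity of `M2` -/

lemma M2_add (Z W : Matrix (Fin N × Fin n) (Fin N × Fin n) ℝ) :
    p.M2 N (Z + W) = p.M2 N Z + p.M2 N W := by
  simp only [M2, Matrix.mul_add, Matrix.add_mul, Finset.sum_add_distrib, smul_add]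
  abel

lemma M2_smul (c : ℝ) (Z : Matrix (Fin N × Fin n) (Fin N × Fin n) ℝ) :
    p.M2 N (c • Z) = c • p.M2 N Z := by
  simp only [M2, Matrix.mul_smul, Matrix.smul_mul, ← Finset.smul_sum, smul_add, smul_smul,
    mul_comm]

lemma M2_zero : p.M2 N (0 : Matrix (Fin N × Fin n) (Fin N × Fin n) ℝ) = 0 := by
  have := p.M2_smul (N := N) 0 0
  simpa using this

lemma M2_transpose (Z : Matrix (Fin N × Fin n) (Fin N × Fin n) ℝ) :
    (p.M2 N Z)ᵀ = p.M2 N Zᵀ := by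
  simp only [M2, Matrix.transpose_add, Matrix.transpose_smul, Matrix.transpose_sum,
    Matrix.transpose_mul, Matrix.transpose_transpose, Matrix.mul_assoc]

/-! #### Affine structure of the RHS of (ODE-P̌₁) -/

/-- The linear part of `Pcheck1RHS` in the `P1` variable. -/
noncomputable def linP (N : ℕ) (Θ : Matrix (Fin n₁) (Fin n) ℝ)
    (X : Matrix (Fin N × Fin n) (Fin N × Fin n) ℝ) :
    Matrix (Fin N × Fin n) (Fin N × Fin n) ℝ :=
  (kronIN N Θ)ᵀ * (p.M2 N ((2 : ℝ) • X)) * kronIN N Θ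
    + (X * (p.bigA N - p.bigBhat N * kronIN N Θ)
      + (p.bigA N - p.bigBhat N * kronIN N Θ)ᵀ * X)

lemma Pcheck1RHS_eq (Θ : Matrix (Fin n₁) (Fin n) ℝ)
    (X : Matrix (Fin N × Fin n) (Fin N × Fin n) ℝ) :
    p.Pcheck1RHS N Θ X = p.linP N Θ X + p.Pcheck1RHS N Θ 0 := by
  simp only [Pcheck1RHS, linP, smul_zero, M2_zero, add_zero, Matrix.zero_mul,
    Matrix.mul_zero, Matrix.mul_add, Matrix.add_mul]
  abel

lemma linP_add (Θ : Matrix (Fin n₁) (Fin n) ℝ)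
    (X Y : Matrix (Fin N × Fin n) (Fin N × Fin n) ℝ) :
    p.linP N Θ (X + Y) = p.linP N Θ X + p.linP N Θ Y := by
  simp only [linP, smul_add, M2_add, Matrix.mul_add, Matrix.add_mul]
  abel

lemma linP_smul (Θ : Matrix (Fin n₁) (Fin n) ℝ) (c : ℝ)
    (X : Matrix (Fin N × Fin n) (Fin N × Fin n) ℝ) :
    p.linP N Θ (c • X) = c • p.linP N Θ X := by
  rw [linP, linP, smul_comm (2 : ℝ) c, M2_smul]
  simp only [Matrix.smul_mul, Matrix.mul_smul, smul_add]

lemma neg_Pcheck1RHS_sub (Θ : Matrix (Fin n₁) (Fin n) ℝ)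
    (X : Matrix (Fin N × Fin n) (Fin N × Fin n) ℝ) :
    -(p.Pcheck1RHS N Θ X) - -(p.Pcheck1RHS N Θ 0) = -(p.linP N Θ X) := by
  rw [Pcheck1RHS_eq]
  abel

lemma Pcheck1RHS_isLinearMap (Θ : Matrix (Fin n₁) (Fin n) ℝ) :
    IsLinearMap ℝ (fun X : Matrix (Fin N × Fin n) (Fin N × Fin n) ℝ =>
      -(p.Pcheck1RHS N Θ X) - -(p.Pcheck1RHS N Θ 0)) := by
  constructor
  · intro X Y
    rw [neg_Pcheck1RHS_sub, neg_Pcheck1RHS_sub, neg_Pcheck1RHS_sub, linP_add]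
    abel
  · intro c X
    rw [neg_Pcheck1RHS_sub, neg_Pcheck1RHS_sub, linP_smul, smul_neg]

/-! #### Block-permutation equivariance -/

lemma bconj_bigA (σ : Equiv.Perm (Fin N)) : bconj σ (p.bigA N) = p.bigA N := by
  ext x y
  simp [bigA, bconj]

lemma bconj_bigQ (σ : Equiv.Perm (Fin N)) : bconj σ (p.bigQ N) = p.bigQ N := by
  ext x y
  simp [bigQ, bconj]

lemma bconj_bigQf (σ : Equiv.Perm (Fin N)) : bconj σ (p.bigQf N) = p.bigQf N := by
  ext x y
  simp [bigQf, bconj]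

lemma bconj_bigR (σ : Equiv.Perm (Fin N)) : bconj σ (p.bigR N) = p.bigR N := by
  ext x y
  simp [bigR, bconj]

lemma bconj_bigBhat (σ : Equiv.Perm (Fin N)) : bconj σ (p.bigBhat N) = p.bigBhat N := by
  ext x y
  simp [bigBhat, bconj]

lemma bconj_kronIN {a b : ℕ} (σ : Equiv.Perm (Fin N)) (M : Matrix (Fin a) (Fin b) ℝ) :
    bconj σ (kronIN N M) = kronIN N M := by
  ext x y
  simp [kronIN, bconj]

lemma BE_apply (i : Fin N) (x : Fin N × Fin n) (y : Fin N × Fin n₁) :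
    (p.bigB N i * p.bigE N i) x y = if x.1 = i ∧ y.1 = i then p.B1 x.2 y.2 else 0 := by
  simp only [Matrix.mul_apply, bigB, bigE, Matrix.of_apply]
  by_cases hx : x.1 = i <;> by_cases hy : y.1 = i <;>
    simp [hx, hy, mul_ite, ite_and, eq_comm]

lemma bconj_BE (σ : Equiv.Perm (Fin N)) (i : Fin N) :
    bconj σ (p.bigB N i * p.bigE N i) = p.bigB N (σ.symm i) * p.bigE N (σ.symm i) := by
  ext x y
  simp only [bconj_apply, BE_apply]
  congr 1
  simp [Equiv.apply_eq_iff_eq_symm_apply]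

lemma B0I_apply (x : Fin N × Fin n) (y : Fin N × Fin n₁) :
    (p.bigB0 N * p.bigIhat N) x y = p.B0 x.2 y.2 / (N : ℝ) := by
  simp [Matrix.mul_apply, bigB0, bigIhat, mul_ite, eq_comm]

lemma bconj_B0I (σ : Equiv.Perm (Fin N)) :
    bconj σ (p.bigB0 N * p.bigIhat N) = p.bigB0 N * p.bigIhat N := by
  ext x y
  simp [bconj_apply, B0I_apply]

/-- Sandwich form of `M2`. -/
lemma M2_form (Z : Matrix (Fin N × Fin n) (Fin N × Fin n) ℝ) :
    p.M2 N Z = (1 / 2 : ℝ) •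
        (∑ i : Fin N, (p.bigB N i * p.bigE N i)ᵀ * Z * (p.bigB N i * p.bigE N i))
      + (1 / 2 : ℝ) • ((p.bigB0 N * p.bigIhat N)ᵀ * Z * (p.bigB0 N * p.bigIhat N)) := by
  simp only [M2, Matrix.transpose_mul, Matrix.mul_assoc]

lemma M2_bconj (σ : Equiv.Perm (Fin N)) (Z : Matrix (Fin N × Fin n) (Fin N × Fin n) ℝ) :
    bconj σ (p.M2 N Z) = p.M2 N (bconj σ Z) := by
  rw [M2_form, M2_form, bconj_add, bconj_smul, bconj_smul, bconj_sum]
  congr 1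
  · congr 1
    have hterm : ∀ i : Fin N,
        bconj σ ((p.bigB N i * p.bigE N i)ᵀ * Z * (p.bigB N i * p.bigE N i))
          = (p.bigB N (σ.symm i) * p.bigE N (σ.symm i))ᵀ * bconj σ Z
              * (p.bigB N (σ.symm i) * p.bigE N (σ.symm i)) := by
      intro i
      rw [bconj_mul, bconj_mul, ← bconj_transpose, bconj_BE]
    calc (∑ i : Fin N, bconj σ ((p.bigB N i * p.bigE N i)ᵀ * Z * (p.bigB N i * p.bigE N i)))
        = ∑ i : Fin N, (p.bigB N (σ.symm i) * p.bigE N (σ.symm i))ᵀ * bconj σ Z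
            * (p.bigB N (σ.symm i) * p.bigE N (σ.symm i)) :=
          Finset.sum_congr rfl fun i _ => hterm i
      _ = ∑ i : Fin N, (p.bigB N i * p.bigE N i)ᵀ * bconj σ Z * (p.bigB N i * p.bigE N i) :=
          Equiv.sum_comp σ.symm
            (fun i => (p.bigB N i * p.bigE N i)ᵀ * bconj σ Z * (p.bigB N i * p.bigE N i))
  · rw [bconj_mul, bconj_mul, ← bconj_transpose, bconj_B0I]

lemma Pcheck1RHS_bconj (σ : Equiv.Perm (Fin N)) (Θ : Matrix (Fin n₁) (Fin n) ℝ)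
    (Z : Matrix (Fin N × Fin n) (Fin N × Fin n) ℝ) :
    bconj σ (p.Pcheck1RHS N Θ Z) = p.Pcheck1RHS N Θ (bconj σ Z) := by
  simp only [Pcheck1RHS, bconj_add, bconj_mul, bconj_sub, bconj_smul, M2_bconj,
    ← bconj_transpose, bconj_bigA, bconj_bigQ, bconj_bigR, bconj_kronIN, bconj_bigBhat]

/-! #### Transpose equivariance -/

lemma QGam_isSymm (hQ : p.Q.IsSymm) : p.QΓ.IsSymm := by
  unfold Matrix.IsSymm QΓ
  rw [Matrix.transpose_sub, Matrix.transpose_sub, Matrix.transpose_mul, Matrix.transpose_mul,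
    Matrix.transpose_mul, Matrix.transpose_transpose, hQ.eq]
  rw [Matrix.mul_assoc, sub_right_comm]

lemma QfGam_isSymm (hQf : p.Qf.IsSymm) : p.QfΓ.IsSymm := by
  unfold Matrix.IsSymm QfΓ
  rw [Matrix.transpose_sub, Matrix.transpose_sub, Matrix.transpose_mul, Matrix.transpose_mul,
    Matrix.transpose_mul, Matrix.transpose_transpose, hQf.eq]
  rw [Matrix.mul_assoc, sub_right_comm]

lemma bigQ_transpose (hQ : p.Q.IsSymm) : (p.bigQ N)ᵀ = p.bigQ N := by
  have hQΓ := p.QGam_isSymm hQ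
  ext x y
  simp only [Matrix.transpose_apply, bigQ, Matrix.of_apply]
  rw [hQ.apply, hQΓ.apply]
  congr 2
  simp [eq_comm]

lemma bigQf_transpose (hQf : p.Qf.IsSymm) : (p.bigQf N)ᵀ = p.bigQf N := by
  have hQΓ := p.QfGam_isSymm hQf
  ext x y
  simp only [Matrix.transpose_apply, bigQf, Matrix.of_apply]
  rw [hQf.apply, hQΓ.apply]
  congr 2
  simp [eq_comm]

lemma bigR_transpose (hR : p.R.IsSymm) : (p.bigR N)ᵀ = p.bigR N := by
  ext x y
  simp only [Matrix.transpose_apply, bigR, Matrix.of_apply]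
  rw [hR.apply]
  congr 1
  simp [eq_comm]

lemma Pcheck1RHS_transpose (hQ : p.Q.IsSymm) (hR : p.R.IsSymm)
    (Θ : Matrix (Fin n₁) (Fin n) ℝ) (Z : Matrix (Fin N × Fin n) (Fin N × Fin n) ℝ) :
    (p.Pcheck1RHS N Θ Z)ᵀ = p.Pcheck1RHS N Θ Zᵀ := by
  simp only [Pcheck1RHS, Matrix.transpose_add, Matrix.transpose_mul, Matrix.transpose_sub,
    Matrix.transpose_transpose, Matrix.transpose_smul, M2_transpose,
    p.bigQ_transpose hQ, p.bigR_transpose hR, Matrix.mul_assoc]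
  abel

end Params

/-- the linear terminal value problem (ODE-P̌₁) has a unique solution on
[0,T], with common symmetric diagonal blocks and common symmetric off-diagonal blocks. -/
theorem solPcheck1_exists_unique_two_block {n n₁ : ℕ} (p : Params n n₁) (hp : p.Standing)
    (Λ₁ Λ₂ : ℝ → Matrix (Fin n) (Fin n) ℝ) (hLim : p.IsSolLim Λ₁ Λ₂) :
    ∀ N : ℕ, 1 ≤ N →
      ∃ P1 : ℝ → Matrix (Fin N × Fin n) (Fin N × Fin n) ℝ,
        p.IsSolPcheck1 N Λ₁ P1 ∧
        (∀ P1' : ℝ → Matrix (Fin N × Fin n) (Fin N × Fin n) ℝ,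
          p.IsSolPcheck1 N Λ₁ P1' → ∀ t ∈ Icc (0 : ℝ) p.T, P1' t = P1 t) ∧
        ∃ Pi1 Pi2 : ℝ → Matrix (Fin n) (Fin n) ℝ,
          ∀ t ∈ Icc (0 : ℝ) p.T,
            (Pi1 t).IsSymm ∧ (Pi2 t).IsSymm ∧
            (∀ (i : Fin N) (k l : Fin n), P1 t (i, k) (i, l) = Pi1 t k l) ∧
            (∀ (i j : Fin N), i ≠ j → ∀ (k l : Fin n),
              P1 t (i, k) (j, l) = Pi2 t k l) := by
  intro N hN
  classical
  obtain ⟨hn, hn₁, hT, hQs, hQfs, hRs⟩ := hp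
  obtain ⟨hsymmL, hpd, hΛT, hΛ2T, hd1, hd2⟩ := hLim
  -- continuity of the time-dependent coefficient
  have hΛcont : ContinuousOn Λ₁ (Icc (0:ℝ) p.T) :=
    cOn_matrix fun i j => fun t ht => (hd1 t ht i j).continuousWithinAt
  have hR1cont : ContinuousOn (fun t => p.R1 (Λ₁ t)) (Icc (0:ℝ) p.T) := by
    unfold Params.R1
    exact cOn_add continuousOn_const (cOn_mul (cOn_mul continuousOn_const hΛcont)
      continuousOn_const)
  have hdet : ∀ t ∈ Icc (0:ℝ) p.T, (p.R1 (Λ₁ t)).det ≠ 0 :=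
    fun t ht => (hpd t ht).1.det_pos.ne'
  have hinv := cOn_inv hR1cont hdet
  have hθ : ContinuousOn (fun t => p.Theta (Λ₁ t)) (Icc (0:ℝ) p.T) := by
    unfold Params.Theta
    exact cOn_mul (cOn_mul hinv continuousOn_const) hΛcont
  have hkron : ContinuousOn (fun t => kronIN N (p.Theta (Λ₁ t))) (Icc (0:ℝ) p.T) := by
    apply cOn_matrix
    intro x y
    simp only [kronIN, Matrix.of_apply]
    by_cases h : x.1 = y.1
    · simp only [if_pos h]
      exact cOn_entry hθ x.2 y.2
    · simp only [if_neg h]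
      exact continuousOn_const
  have hRHScont : ∀ X : Matrix (Fin N × Fin n) (Fin N × Fin n) ℝ,
      ContinuousOn (fun t => -(p.Pcheck1RHS N (p.Theta (Λ₁ t)) X)) (Icc (0:ℝ) p.T) := by
    intro X
    simp only [Params.Pcheck1RHS]
    apply cOn_neg
    apply cOn_add
    apply cOn_add
    apply cOn_add
    · exact cOn_mul (cOn_mul (cOn_transpose hkron) continuousOn_const) hkron
    · exact cOn_mul continuousOn_const
        (cOn_sub continuousOn_const (cOn_mul continuousOn_const hkron))
    · exact cOn_mul
        (cOn_transpose (cOn_sub continuousOn_const (cOn_mul continuousOn_const hkron)))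
        continuousOn_const
    · exact continuousOn_const
  -- the ODE vector field, seen on the plain pi type
  have hlin : ∀ t ∈ Icc (0:ℝ) p.T, IsLinearMap ℝ
      (fun w : Matrix (Fin N × Fin n) (Fin N × Fin n) ℝ =>
        -(p.Pcheck1RHS N (p.Theta (Λ₁ t)) w) - -(p.Pcheck1RHS N (p.Theta (Λ₁ t)) 0)) :=
    fun t _ => p.Pcheck1RHS_isLinearMap _
  obtain ⟨L, hLip⟩ := affine_lipschitz
    (E := (Fin N × Fin n) → (Fin N × Fin n) → ℝ)
    (fun t X => -(p.Pcheck1RHS N (p.Theta (Λ₁ t)) X)) 0 p.T hlin hRHScont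
  obtain ⟨f, hfT, hf⟩ := lin_ode_exists
    (E := (Fin N × Fin n) → (Fin N × Fin n) → ℝ)
    (fun t X => -(p.Pcheck1RHS N (p.Theta (Λ₁ t)) X)) 0 p.T hT.le L hLip hRHScont
    (p.bigQf N)
  have hsol : p.IsSolPcheck1 N Λ₁ f := by
    refine ⟨hfT, fun t ht x y => ?_⟩
    exact hasDerivWithinAt_pi.mp ((hasDerivWithinAt_pi.mp (hf t ht)) x) y
  have huniq : ∀ P1' : ℝ → Matrix (Fin N × Fin n) (Fin N × Fin n) ℝ,
      p.IsSolPcheck1 N Λ₁ P1' → ∀ t ∈ Icc (0:ℝ) p.T, P1' t = f t := by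
    intro P1' hsol' t ht
    obtain ⟨hT', hd'⟩ := hsol'
    exact lin_ode_unique _ 0 p.T L hLip P1' f
      (fun u hu => hasDerivWithinAt_pi.mpr fun x =>
        hasDerivWithinAt_pi.mpr fun y => hd' u hu x y)
      hf (hT'.trans hfT.symm) t ht
  -- invariance under block permutations
  have hσ : ∀ σ : Equiv.Perm (Fin N), ∀ t ∈ Icc (0:ℝ) p.T, bconj σ (f t) = f t := by
    intro σ
    apply huniq (fun t => bconj σ (f t))
    refine ⟨?_, ?_⟩
    · show bconj σ (f p.T) = p.bigQf N
      have h0 : (f p.T : Matrix (Fin N × Fin n) (Fin N × Fin n) ℝ) = p.bigQf N := hfT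
      rw [h0, p.bconj_bigQf σ]
    · intro t ht x y
      have h2 := hsol.2 t ht (σ x.1, x.2) (σ y.1, y.2)
      have h3 : (-(p.Pcheck1RHS N (p.Theta (Λ₁ t)) (bconj σ (f t)))) x y
          = (-(p.Pcheck1RHS N (p.Theta (Λ₁ t)) (f t))) (σ x.1, x.2) (σ y.1, y.2) := by
        exact (congrArg (fun M : Matrix (Fin N × Fin n) (Fin N × Fin n) ℝ => (-M) x y)
          (p.Pcheck1RHS_bconj σ (p.Theta (Λ₁ t)) (f t))).symm
      rw [h3]
      exact h2
  -- invariance under transpose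
  have hsymmP : ∀ t ∈ Icc (0:ℝ) p.T,
      (f t : Matrix (Fin N × Fin n) (Fin N × Fin n) ℝ)ᵀ = f t := by
    have h := huniq (fun s => (f s)ᵀ) ?_
    · exact h
    refine ⟨?_, ?_⟩
    · show (f p.T : Matrix (Fin N × Fin n) (Fin N × Fin n) ℝ)ᵀ = p.bigQf N
      have h0 : (f p.T : Matrix (Fin N × Fin n) (Fin N × Fin n) ℝ) = p.bigQf N := hfT
      rw [h0, p.bigQf_transpose hQfs]
    · intro t ht x y
      have h2 := hsol.2 t ht y x
      have h3 : (-(p.Pcheck1RHS N (p.Theta (Λ₁ t)) ((f t)ᵀ))) x y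
          = (-(p.Pcheck1RHS N (p.Theta (Λ₁ t)) (f t))) y x := by
        exact (congrArg (fun M : Matrix (Fin N × Fin n) (Fin N × Fin n) ℝ => (-M) x y)
          (p.Pcheck1RHS_transpose hQs hRs (p.Theta (Λ₁ t)) (f t))).symm
      rw [h3]
      exact h2
  -- assemble
  set i0 : Fin N := ⟨0, by omega⟩ with hi0
  refine ⟨f, hsol, huniq, fun t => Matrix.of fun k l => f t (i0, k) (i0, l),
    fun t => if h : 1 < N then Matrix.of (fun k l => f t (i0, k) (⟨1, h⟩, l))
      else Matrix.of fun k l => f t (i0, k) (i0, l), fun t ht => ?_⟩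
  have hentry : ∀ x y, f t x y = f t y x := by
    intro x y
    have := congrFun (congrFun (hsymmP t ht) x) y
    change f t y x = f t x y at this
    exact this.symm
  have hperm : ∀ (σ : Equiv.Perm (Fin N)) (x y : Fin N × Fin n),
      f t (σ x.1, x.2) (σ y.1, y.2) = f t x y := by
    intro σ x y
    exact congrFun (congrFun (hσ σ t ht) x) y
  refine ⟨?_, ?_, ?_, ?_⟩
  · -- Pi1 symmetric
    ext k l
    show f t (i0, l) (i0, k) = f t (i0, k) (i0, l)
    exact hentry (i0, l) (i0, k)
  · -- Pi2 symmetric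
    by_cases h1N : 1 < N
    · simp only [dif_pos h1N]
      ext k l
      show f t (i0, l) ((⟨1, h1N⟩ : Fin N), k) = f t (i0, k) ((⟨1, h1N⟩ : Fin N), l)
      set i1 : Fin N := ⟨1, h1N⟩ with hi1
      have hne : i0 ≠ i1 := by
        simp only [hi0, hi1, ne_eq, Fin.mk.injEq]
        omega
      have hstep1 : f t (i1, l) (i0, k) = f t (i0, l) (i1, k) := by
        have := hperm (Equiv.swap i0 i1) (i0, l) (i1, k)
        simpa [Equiv.swap_apply_left, Equiv.swap_apply_right] using this
      have hstep2 : f t (i1, l) (i0, k) = f t (i0, k) (i1, l) := hentry _ _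
      rw [← hstep1, hstep2]
    · simp only [dif_neg h1N]
      ext k l
      show f t (i0, l) (i0, k) = f t (i0, k) (i0, l)
      exact hentry (i0, l) (i0, k)
  · -- diagonal blocks
    intro i k l
    show f t (i, k) (i, l) = f t (i0, k) (i0, l)
    have := hperm (Equiv.swap i0 i) (i0, k) (i0, l)
    simpa [Equiv.swap_apply_left] using this
  · -- off-diagonal blocks
    intro i j hij k l
    have h1N : 1 < N := by
      by_contra hcon
      push_neg at hcon
      exact hij (Fin.ext (by omega))
    simp only [dif_pos h1N]
    set i1 : Fin N := ⟨1, h1N⟩ with hi1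
    show f t (i, k) (j, l) = f t (i0, k) (i1, l)
    have hne01 : i0 ≠ i1 := by
      simp only [hi0, hi1, ne_eq, Fin.mk.injEq]
      omega
    set τ : Equiv.Perm (Fin N) := Equiv.swap i0 i with hτ
    set j' : Fin N := τ j with hj'def
    have hj' : i0 ≠ j' := by
      intro hEq
      have : τ i0 = τ j' := congrArg τ hEq
      rw [hj'def, Equiv.swap_apply_self] at this
      rw [hτ, Equiv.swap_apply_left] at this
      exact hij this
    set σ : Equiv.Perm (Fin N) := (Equiv.swap i1 j').trans τ with hσdef
    have hσ0 : σ i0 = i := by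
      simp only [hσdef, Equiv.trans_apply]
      rw [Equiv.swap_apply_of_ne_of_ne hne01 hj', hτ, Equiv.swap_apply_left]
    have hσ1 : σ i1 = j := by
      simp only [hσdef, Equiv.trans_apply]
      rw [Equiv.swap_apply_left, hj'def, Equiv.swap_apply_self]
    have := hperm σ (i0, k) (i1, l)
    rw [hσ0, hσ1] at this
    exact this

end LQ
end
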